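/- The double zeta value ζ(2,1) = Σ_{n>m>0} 1/(n²m) equals ζ(3) = Σ_{n>0} 1/n³. -/

import Mathlib

noncomputable def zeta1 (k : ℕ) : ℝ := ∑' n : ℕ+, 1 / (n : ℝ) ^ k

noncomputable def zeta2 (a b : ℕ) : ℝ :=
  ∑' p : {p : ℕ × ℕ // p.2 < p.1 ∧ 0 < p.2},
    1 / ((p.val.1 : ℝ) ^ a * (p.val.2 : ℝ) ^ b)

/-! Auxiliary definitions -/

/-- Harmonic number `H n = ∑_{i=1}^n 1/i`. -/
noncomputable def Hh (n : ℕ) : ℝ := ∑ i ∈ Finset.range n, 1/((i:ℝ)+1)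

/-- `hF (a,b) = 1/(a b (a+b))`. -/
noncomputable def hF : ℕ+ × ℕ+ → ℝ :=
  fun p => 1/(((p.1:ℕ):ℝ)*((p.2:ℕ):ℝ)*(((p.1:ℕ):ℝ)+((p.2:ℕ):ℝ)))

/-- `gF (a,b) = 1/(a (a+b)²)`. -/
noncomputable def gF : ℕ+ × ℕ+ → ℝ :=
  fun p => 1/(((p.1:ℕ):ℝ)*((((p.1:ℕ):ℝ)+((p.2:ℕ):ℝ)))^2)

lemma pnat_one_le (a : ℕ+) : (1:ℝ) ≤ ((a:ℕ):ℝ) := by exact_mod_cast a.one_le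

/-! Telescoping sum -/

lemma tele (a : ℕ) :
    HasSum (fun k : ℕ => 1/((k:ℝ)+1) - 1/((k:ℝ)+(a:ℝ)+1)) (Hh a) := by
  set u : ℕ → ℝ := fun k => 1/((k:ℝ)+1) with hu
  have hnonneg : ∀ k : ℕ, 0 ≤ 1/((k:ℝ)+1) - 1/((k:ℝ)+(a:ℝ)+1) := by
    intro k
    have h1 : (0:ℝ) < (k:ℝ)+1 := by positivity
    have : 1/((k:ℝ)+(a:ℝ)+1) ≤ 1/((k:ℝ)+1) := by
      apply one_div_le_one_div_of_le h1
      have : (0:ℝ) ≤ (a:ℝ) := by positivity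
      linarith
    linarith
  rw [hasSum_iff_tendsto_nat_of_nonneg hnonneg]
  set T : ℕ → ℝ := fun N => ∑ k ∈ Finset.Ico N (a+N), u k with hT
  have key : ∀ N, a ≤ N →
      (∑ k ∈ Finset.range N, (1/((k:ℝ)+1) - 1/((k:ℝ)+(a:ℝ)+1))) = Hh a - T N := by
    intro N hN
    have e1 : ∀ k : ℕ, 1/((k:ℝ)+(a:ℝ)+1) = u (k+a) := by
      intro k; simp only [hu]; push_cast; ring_nf
    rw [Finset.sum_sub_distrib]
    have e2 : ∑ k ∈ Finset.range N, 1/((k:ℝ)+(a:ℝ)+1) = ∑ k ∈ Finset.Ico a (a+N), u k := by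
      rw [Finset.sum_Ico_eq_sum_range]
      simp only [Nat.add_sub_cancel_left]
      refine Finset.sum_congr rfl fun k _ => ?_
      rw [e1]; congr 1; omega
    rw [e2]
    have e3 : ∑ k ∈ Finset.range N, u k = Hh a + ∑ k ∈ Finset.Ico a N, u k := by
      rw [Finset.range_eq_Ico, ← Finset.sum_Ico_consecutive u (Nat.zero_le a) hN]
      congr 1
      rw [Hh, Finset.range_eq_Ico]
    have e4 : ∑ k ∈ Finset.Ico a (a+N), u k = ∑ k ∈ Finset.Ico a N, u k + T N := by
      rw [← Finset.sum_Ico_consecutive u hN (by omega : N ≤ a + N)]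
    rw [e3, e4]; ring
  have hTnn : ∀ N, 0 ≤ T N := by
    intro N
    apply Finset.sum_nonneg
    intro k _
    simp only [hu]
    positivity
  have hTle : ∀ N, T N ≤ (a:ℝ)/((N:ℝ)+1) := by
    intro N
    calc T N ≤ ∑ k ∈ Finset.Ico N (a+N), 1/((N:ℝ)+1) := by
            apply Finset.sum_le_sum
            intro k hk
            simp only [Finset.mem_Ico] at hk
            apply one_div_le_one_div_of_le (by positivity)
            have : (N:ℝ) ≤ (k:ℝ) := by exact_mod_cast hk.1
            linarith
        _ = (a:ℝ)/((N:ℝ)+1) := by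
            rw [Finset.sum_const, Nat.card_Ico]
            have : a + N - N = a := by omega
            rw [this, nsmul_eq_mul]
            ring
  have hlim : Filter.Tendsto (fun N : ℕ => (a:ℝ)/((N:ℝ)+1)) Filter.atTop (nhds 0) := by
    have := (tendsto_const_div_atTop_nhds_zero_nat (a:ℝ)).comp
        (Filter.tendsto_add_atTop_nat 1)
    apply this.congr
    intro n
    simp [Function.comp]
  have hTz : Filter.Tendsto T Filter.atTop (nhds 0) := squeeze_zero hTnn hTle hlim
  have h1 : Filter.Tendsto (fun N => Hh a - T N) Filter.atTop (nhds (Hh a)) := by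
    simpa using tendsto_const_nhds.sub hTz
  apply h1.congr'
  filter_upwards [Filter.eventually_atTop.2 ⟨a, fun N hN => (key N hN)⟩] with N h
  exact h.symm

/-! Summability -/

lemma sum32 : Summable (fun n : ℕ+ => (((n:ℕ):ℝ) ^ ((3:ℝ)/2))⁻¹) := by
  have h : Summable (fun n : ℕ => ((n:ℝ) ^ ((3:ℝ)/2))⁻¹) :=
    Real.summable_nat_rpow_inv.mpr (by norm_num)
  exact h.comp_injective PNat.coe_injective

lemma hbound (x y : ℝ) (hx : 1 ≤ x) (hy : 1 ≤ y) :
    1/(x*y*(x+y)) ≤ (x ^ ((3:ℝ)/2))⁻¹ * (y ^ ((3:ℝ)/2))⁻¹ := by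
  have hx0 : (0:ℝ) < x := by linarith
  have hy0 : (0:ℝ) < y := by linarith
  rw [← mul_inv, ← Real.mul_rpow hx0.le hy0.le, one_div]
  have h1 : (x*y) ^ ((3:ℝ)/2) = (x*y) * Real.sqrt (x*y) := by
    rw [show (3:ℝ)/2 = 1 + 1/2 by norm_num, Real.rpow_add (by positivity),
      Real.rpow_one, Real.sqrt_eq_rpow]
  have h2 : Real.sqrt (x*y) ≤ x+y := by
    rw [show x+y = Real.sqrt ((x+y)^2) from (Real.sqrt_sq (by positivity)).symm]
    apply Real.sqrt_le_sqrt; nlinarith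
  have h3 : (x*y) ^ ((3:ℝ)/2) ≤ x*y*(x+y) := by
    rw [h1]
    exact mul_le_mul_of_nonneg_left h2 (by positivity)
  exact inv_anti₀ (by positivity) h3

lemma hF_summable : Summable hF := by
  have hb : Summable (fun p : ℕ+ × ℕ+ =>
      (((p.1:ℕ):ℝ) ^ ((3:ℝ)/2))⁻¹ * (((p.2:ℕ):ℝ) ^ ((3:ℝ)/2))⁻¹) :=
    sum32.mul_of_nonneg sum32 (fun n => by positivity) (fun n => by positivity)
  refine Summable.of_nonneg_of_le (fun p => by unfold hF; positivity) ?_ hb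
  exact fun p => hbound _ _ (pnat_one_le p.1) (pnat_one_le p.2)

lemma gF_le_hF (p : ℕ+ × ℕ+) : gF p ≤ hF p := by
  unfold gF hF
  have h1 := pnat_one_le p.1
  have h2 := pnat_one_le p.2
  have hx : (0:ℝ) < ((p.1:ℕ):ℝ) := by linarith
  have hy : (0:ℝ) < ((p.2:ℕ):ℝ) := by linarith
  apply one_div_le_one_div_of_le (by positivity)
  nlinarith [mul_pos hx hx, mul_pos hx hy, sq_nonneg (((p.1:ℕ):ℝ)+((p.2:ℕ):ℝ))]

lemma gF_summable : Summable gF :=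
  Summable.of_nonneg_of_le (fun p => by unfold gF; positivity) gF_le_hF hF_summable

lemma hF_eq (p : ℕ+ × ℕ+) : hF p = gF p + gF p.swap := by
  unfold gF hF
  have h1 := pnat_one_le p.1
  have h2 := pnat_one_le p.2
  simp only [Prod.fst_swap, Prod.snd_swap]
  have hx : (0:ℝ) < ((p.1:ℕ):ℝ) := by linarith
  have hy : (0:ℝ) < ((p.2:ℕ):ℝ) := by linarith
  field_simp
  ring

/-! The reindexing equivalence -/

def eNM : ℕ+ × ℕ+ ≃ {p : ℕ × ℕ // p.2 < p.1 ∧ 0 < p.2} where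
  toFun p := ⟨((p.1:ℕ) + (p.2:ℕ), (p.1:ℕ)), by
    constructor
    · have := p.2.pos; omega
    · exact p.1.pos⟩
  invFun q := (⟨q.val.2, q.2.2⟩, ⟨q.val.1 - q.val.2, by have := q.2.1; omega⟩)
  left_inv p := by
    apply Prod.ext
    · exact Subtype.ext rfl
    · exact Subtype.ext (by apply Nat.add_sub_cancel_left)
  right_inv q := by
    apply Subtype.ext
    have h := q.2.1
    apply Prod.ext <;> simp <;> omega

/-! `zeta2 2 1` as a sum of `gF` -/

lemma zeta2_eq_gF : zeta2 2 1 = ∑' p : ℕ+ × ℕ+, gF p := by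
  rw [zeta2, ← eNM.tsum_eq]
  apply tsum_congr
  intro p
  show 1 / ((((p.1:ℕ) + (p.2:ℕ) : ℕ):ℝ) ^ 2 * ((p.1:ℕ):ℝ) ^ 1) = gF p
  unfold gF
  push_cast
  ring

/-! Symmetry: `∑ hF = 2 ∑ gF` -/

lemma hF_tsum_eq : ∑' p : ℕ+ × ℕ+, hF p = 2 * ∑' p : ℕ+ × ℕ+, gF p := by
  have hswap : Summable (fun p : ℕ+ × ℕ+ => gF p.swap) := by
    have := (Equiv.prodComm ℕ+ ℕ+).summable_iff.mpr gF_summable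
    exact this
  calc ∑' p : ℕ+ × ℕ+, hF p = ∑' p : ℕ+ × ℕ+, (gF p + gF p.swap) := tsum_congr hF_eq
    _ = (∑' p : ℕ+ × ℕ+, gF p) + ∑' p : ℕ+ × ℕ+, gF p.swap := Summable.tsum_add gF_summable hswap
    _ = 2 * ∑' p : ℕ+ × ℕ+, gF p := by
        have : ∑' p : ℕ+ × ℕ+, gF p.swap = ∑' p : ℕ+ × ℕ+, gF p :=
          (Equiv.prodComm ℕ+ ℕ+).tsum_eq gF
        rw [this]; ring

/-! Fiberwise sum of `hF` -/

lemma fiber (a : ℕ+) :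
    HasSum (fun b : ℕ+ => hF (a, b)) ((1/((a:ℕ):ℝ)^2) * Hh (a:ℕ)) := by
  have h0 := (tele (a:ℕ)).mul_left (1/((a:ℕ):ℝ)^2)
  have h1 := (Equiv.pnatEquivNat.hasSum_iff
    (f := fun k : ℕ => 1/((a:ℕ):ℝ)^2 * (1/((k:ℝ)+1) - 1/((k:ℝ)+((a:ℕ):ℝ)+1)))).mpr h0
  have key : ∀ b : ℕ+,
      ((fun k : ℕ => 1/((a:ℕ):ℝ)^2 * (1/((k:ℝ)+1) - 1/((k:ℝ)+((a:ℕ):ℝ)+1)))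
        ∘ ⇑Equiv.pnatEquivNat) b = hF (a, b) := by
    intro b
    simp only [Function.comp, Equiv.pnatEquivNat_apply]
    have hb : ((b.natPred : ℕ):ℝ) + 1 = ((b:ℕ):ℝ) := by
      rw [show ((b:ℕ):ℝ) = ((b.natPred + 1 : ℕ):ℝ) by rw [PNat.natPred_add_one]]
      push_cast
      ring
    unfold hF
    rw [show ((b.natPred : ℕ):ℝ) + ((a:ℕ):ℝ) + 1 = ((a:ℕ):ℝ) + ((b:ℕ):ℝ) by
      rw [← hb]; ring, hb]
    have hx : (0:ℝ) < ((a:ℕ):ℝ) := by exact_mod_cast a.pos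
    have hy : (0:ℝ) < ((b:ℕ):ℝ) := by exact_mod_cast b.pos
    field_simp
    ring
  exact (funext key) ▸ h1

/-! Iterated sum of `hF` -/

lemma hF_tsum_iterated :
    ∑' p : ℕ+ × ℕ+, hF p = ∑' a : ℕ+, (1/((a:ℕ):ℝ)^2) * Hh (a:ℕ) := by
  rw [Summable.tsum_prod' hF_summable (fun a => (fiber a).summable)]
  exact tsum_congr fun a => (fiber a).tsum_eq

/-! `zeta2 2 1` as an iterated sum over ℕ -/

/-- The set of index pairs for the double zeta value. -/
def SS : Set (ℕ × ℕ) := {p | p.2 < p.1 ∧ 0 < p.2}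

/-- The summand of `zeta2 2 1`. -/
noncomputable def FF : ℕ × ℕ → ℝ := fun p => 1 / ((p.1:ℝ)^2 * (p.2:ℝ))

lemma F_subtype_summable :
    Summable (fun q : {p : ℕ × ℕ // p.2 < p.1 ∧ 0 < p.2} => FF q.val) := by
  apply (eNM.summable_iff (f := fun q : {p : ℕ × ℕ // p.2 < p.1 ∧ 0 < p.2} => FF q.val)).mp
  apply gF_summable.congr
  intro p
  show gF p = FF ((p.1:ℕ)+(p.2:ℕ), (p.1:ℕ))
  unfold gF FF
  push_cast
  ring

lemma ind_summable : Summable (SS.indicator FF) :=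
  summable_subtype_iff_indicator.mp F_subtype_summable

/-- The outer summand after summing the inner (finite) sum. -/
noncomputable def cN : ℕ → ℝ := fun n => (1/(n:ℝ)^2) * Hh (n-1)

lemma inner_eq (n : ℕ) : ∑' m : ℕ, SS.indicator FF (n, m) = cN n := by
  have h0 : ∑' m : ℕ, SS.indicator FF (n, m) = ∑ m ∈ Finset.Ioo 0 n, SS.indicator FF (n, m) := by
    apply tsum_eq_sum
    intro m hm
    apply Set.indicator_of_notMem
    intro hmem
    obtain ⟨h1, h2⟩ := hmem
    simp only [Finset.mem_Ioo] at hm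
    exact hm ⟨h2, h1⟩
  rw [h0]
  have h1 : ∀ m ∈ Finset.Ioo 0 n, SS.indicator FF (n, m) = FF (n, m) := by
    intro m hm
    simp only [Finset.mem_Ioo] at hm
    exact Set.indicator_of_mem (show (n,m) ∈ SS from ⟨hm.2, hm.1⟩) FF
  rw [Finset.sum_congr rfl h1]
  rw [show Finset.Ioo 0 n = Finset.Ico 1 n from (Finset.Ico_add_one_left_eq_Ioo 0 n).symm]
  rw [Finset.sum_Ico_eq_sum_range]
  unfold cN Hh FF
  rw [Finset.mul_sum]
  apply Finset.sum_congr rfl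
  intro k _
  push_cast
  rw [one_div_mul_one_div]
  congr 1
  ring

lemma zeta2_eq_cN : zeta2 2 1 = ∑' n : ℕ, cN n := by
  have h1 : zeta2 2 1 = ∑' q : {p : ℕ × ℕ // p.2 < p.1 ∧ 0 < p.2}, FF q.val := by
    rw [zeta2]
    apply tsum_congr
    intro q
    unfold FF
    norm_num
  rw [h1]
  have h2 : ∑' q : {p : ℕ × ℕ // p.2 < p.1 ∧ 0 < p.2}, FF q.val
      = ∑' p : ℕ × ℕ, SS.indicator FF p := tsum_subtype SS FF
  rw [h2]
  have hinj : ∀ n : ℕ, Function.Injective (fun m : ℕ => ((n, m) : ℕ × ℕ)) :=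
    fun n m m' h => by simpa using h
  rw [Summable.tsum_prod' ind_summable (fun n => ind_summable.comp_injective (hinj n))]
  exact tsum_congr inner_eq

lemma cN_summable : Summable cN := by
  have := ((summable_prod_of_nonneg (fun p => Set.indicator_nonneg
    (fun q _ => by unfold FF; positivity) p)).mp ind_summable).2
  exact this.congr inner_eq

/-! zeta1 3 over ℕ -/

lemma zeta1_eq : zeta1 3 = ∑' n : ℕ, 1/((n:ℝ)+1)^3 := by
  rw [zeta1, ← Equiv.pnatEquivNat.symm.tsum_eq]
  apply tsum_congr
  intro n
  show 1 / ((n.succPNat : ℕ):ℝ)^3 = 1/((n:ℝ)+1)^3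
  rw [Nat.succPNat_coe]
  push_cast
  ring

lemma zeta1_summand_summable : Summable (fun n : ℕ => 1/((n:ℝ)+1)^3) := by
  have h : Summable (fun n : ℕ => 1/(n:ℝ)^3) := Real.summable_one_div_nat_pow.mpr (by norm_num)
  have := (summable_nat_add_iff 1).mpr h
  apply this.congr
  intro n
  push_cast
  ring

/-! Main theorem -/

theorem zeta_two_one : zeta2 2 1 = zeta1 3 := by
  have hA : ∑' p : ℕ+ × ℕ+, hF p = 2 * zeta2 2 1 := by
    rw [hF_tsum_eq, zeta2_eq_gF]
  have hshift : ∑' a : ℕ+, (1/((a:ℕ):ℝ)^2) * Hh (a:ℕ)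
      = ∑' n : ℕ, (1/((n:ℝ)+1)^2) * Hh (n+1) := by
    rw [← Equiv.pnatEquivNat.symm.tsum_eq]
    apply tsum_congr
    intro n
    show (1/(((n.succPNat : ℕ)):ℝ)^2) * Hh (n.succPNat : ℕ) = _
    rw [Nat.succPNat_coe]
    congr 1
    push_cast
    ring
  have hsplit : ∀ n : ℕ, (1/((n:ℝ)+1)^2) * Hh (n+1) = cN (n+1) + 1/((n:ℝ)+1)^3 := by
    intro n
    unfold cN Hh
    rw [Finset.sum_range_succ]
    push_cast
    have hn : ((n:ℝ)+1) ≠ 0 := by positivity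
    field_simp
  have hcs : Summable (fun n : ℕ => cN (n+1)) := (summable_nat_add_iff 1).mpr cN_summable
  have hsum2 : ∑' n : ℕ, (1/((n:ℝ)+1)^2) * Hh (n+1)
      = (∑' n : ℕ, cN (n+1)) + ∑' n : ℕ, 1/((n:ℝ)+1)^3 := by
    rw [← Summable.tsum_add hcs zeta1_summand_summable]
    exact tsum_congr hsplit
  have hc0 : cN 0 = 0 := by unfold cN Hh; norm_num
  have htail : ∑' n : ℕ, cN (n+1) = zeta2 2 1 := by
    rw [zeta2_eq_cN, Summable.tsum_eq_zero_add cN_summable, hc0, zero_add]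
  have : 2 * zeta2 2 1 = zeta2 2 1 + zeta1 3 := by
    rw [← hA, hF_tsum_iterated, hshift, hsum2, htail, zeta1_eq]
  linarith
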